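/- Let R be a Noetherian domain and I ⊂ R an ideal generated by m elements. Then tr(I)^(m−j) ⊆ Fitt_j(I) for all j with 1 ≤ j ≤ m. -/

import Mathlib

open Ideal IsLocalRing

/-- The `j`-th Fitting ideal of the `R`-module `M`, computed with respect to the
generating family `g : Fin m → M`: the ideal generated by the `(m-j)`-minors of a
relation matrix of `M` with respect to `g`. -/
noncomputable def fittingIdeal {R : Type} [CommRing R] {M : Type} [AddCommGroup M] [Module R M]
    (m : ℕ) (g : Fin m → M) (j : ℕ) : Ideal R :=
  Ideal.span { x : R | ∃ c : Fin (m - j) → (Fin m → R),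
    (∀ l, ∑ i, c l i • g i = 0) ∧
    ∃ r : Fin (m - j) → Fin m, x = (Matrix.of fun i l => c l (r i)).det }

/-- The grade of an ideal: the supremum of lengths of regular sequences contained in `I`. -/
noncomputable def Ideal.grade' {R : Type} [CommRing R] (I : Ideal R) : ℕ∞ :=
  sSup { n : ℕ∞ | ∃ rs : List R, (rs.length : ℕ∞) = n ∧ (∀ r ∈ rs, r ∈ I) ∧
    RingTheory.Sequence.IsRegular R rs }

/-- The minimal number of generators of a module, as an element of `ℕ∞`. -/
noncomputable def mu (R : Type) [Semiring R] (M : Type) [AddCommMonoid M] [Module R M] : ℕ∞ :=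
  sInf { n : ℕ∞ | ∃ s : Finset M, (s.card : ℕ∞) = n ∧ Submodule.span R (s : Set M) = ⊤ }

/-- The minimal number of generators of an ideal, as an element of `ℕ∞`. -/
noncomputable def muId {R : Type} [CommRing R] (I : Ideal R) : ℕ∞ :=
  sInf { n : ℕ∞ | ∃ s : Finset R, (s.card : ℕ∞) = n ∧ Ideal.span (s : Set R) = I }

/-- The height of an ideal: the infimum of the heights of primes containing it. -/
noncomputable def heightI {R : Type} [CommRing R] (I : Ideal R) : ℕ∞ :=
  sInf { h : ℕ∞ | ∃ P : PrimeSpectrum R, I ≤ P.asIdeal ∧ Order.height P = h }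

/-- A (Noetherian) ring is Cohen–Macaulay if grade equals height for every proper ideal. -/
def IsCohenMacaulayRing (R : Type) [CommRing R] : Prop :=
  ∀ I : Ideal R, I ≠ ⊤ → Ideal.grade' I = heightI I

/-- A Noetherian local ring is Cohen–Macaulay if the grade of its maximal ideal
(its depth) equals its Krull dimension. -/
def IsCohenMacaulayLocalRing (R : Type) [CommRing R] [IsLocalRing R] : Prop :=
  (Ideal.grade' (maximalIdeal R) : WithBot ℕ∞) = ringKrullDim R

/-- A Noetherian local ring is regular if its maximal ideal is generated by
`dim R` elements. -/
def IsRegularLocalRing' (A : Type) [CommRing A] [IsLocalRing A] : Prop :=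
  IsNoetherianRing A ∧ (muId (maximalIdeal A) : WithBot ℕ∞) = ringKrullDim A

/-- A ring is regular if all its localizations at primes are regular local rings. -/
def IsRegularRing' (R : Type) [CommRing R] : Prop :=
  ∀ (P : Ideal R) [P.IsPrime], IsRegularLocalRing' (Localization.AtPrime P)

/-- The trace ideal of a module: the sum of the images of all homomorphisms to the ring. -/
noncomputable def traceIdeal (R : Type) [CommRing R] (M : Type) [AddCommGroup M] [Module R M] :
    Ideal R :=
  ⨆ φ : M →ₗ[R] R, LinearMap.range φ

open CategoryTheory in
/-- `Ext^n_R(N, M)` for `R`-modules `N`, `M`. -/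
noncomputable def extModule (R : Type) [CommRing R] (n : ℕ) (N M : ModuleCat R) : ModuleCat R :=
  ((Ext R (ModuleCat R) n).obj (Opposite.op N)).obj M

/-- `M` is a canonical module of the local ring `R` if it is finitely generated and
`Ext^i(k, M)` vanishes for `i ≠ dim R` and is isomorphic to the residue field `k`
for `i = dim R`. -/
def IsCanonicalModule (R : Type) [CommRing R] [IsLocalRing R]
    (M : Type) [AddCommGroup M] [Module R M] : Prop :=
  Module.Finite R M ∧
  (∀ i : ℕ, (i : WithBot ℕ∞) ≠ ringKrullDim R →
    Subsingleton (extModule R i (ModuleCat.of R (ResidueField R)) (ModuleCat.of R M))) ∧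
  (∀ i : ℕ, (i : WithBot ℕ∞) = ringKrullDim R →
    Nonempty (extModule R i (ModuleCat.of R (ResidueField R)) (ModuleCat.of R M)
      ≅ ModuleCat.of R (ResidueField R)))

lemma exists_good_rows {m : ℕ} : ∀ {n : ℕ} (σ : Fin n → Fin m) (S : Finset (Fin m)),
    n + S.card < m →
    ∃ p : Fin n → Fin m, Function.Injective p ∧ (∀ l, p l ∉ S) ∧
      ∀ l l', σ l = p l' → l' < l := by
  intro n
  induction n with
  | zero =>
    intro σ S _
    exact ⟨Fin.elim0, fun a => a.elim0, fun l => l.elim0, fun l => l.elim0⟩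
  | succ n ih =>
    intro σ S hcard
    have himg := Finset.card_image_le (s := (Finset.univ : Finset (Fin (n+1)))) (f := σ)
    simp only [Finset.card_univ, Fintype.card_fin] at himg
    have h1 : (S ∪ Finset.image σ Finset.univ).card < m := by
      have := Finset.card_union_le S (Finset.image σ Finset.univ)
      omega
    have h2 : S ∪ Finset.image σ Finset.univ ≠ Finset.univ := by
      intro h
      rw [h, Finset.card_univ, Fintype.card_fin] at h1
      omega
    obtain ⟨q, hq⟩ : ∃ q, q ∉ S ∪ Finset.image σ Finset.univ := by
      by_contra hcon
      push_neg at hcon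
      exact h2 (Finset.eq_univ_iff_forall.mpr hcon)
    have hqS : q ∉ S := fun h => hq (Finset.mem_union_left _ h)
    have hqσ : ∀ l, σ l ≠ q := fun l h =>
      hq (Finset.mem_union_right _ (h ▸ Finset.mem_image_of_mem σ (Finset.mem_univ l)))
    obtain ⟨p', hinj, hS, hlt⟩ := ih (σ ∘ Fin.castSucc) (insert q S) (by
      have := Finset.card_insert_le q S; omega)
    have hp'q : ∀ k, p' k ≠ q := fun k h => hS k (h ▸ Finset.mem_insert_self q S)
    refine ⟨Fin.snoc p' q, ?_, ?_, ?_⟩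
    · intro a b hab
      induction a using Fin.lastCases with
      | last =>
        induction b using Fin.lastCases with
        | last => rfl
        | cast k =>
          rw [Fin.snoc_last, Fin.snoc_castSucc] at hab
          exact absurd hab.symm (hp'q k)
      | cast u =>
        induction b using Fin.lastCases with
        | last =>
          rw [Fin.snoc_last, Fin.snoc_castSucc] at hab
          exact absurd hab (hp'q u)
        | cast k =>
          rw [Fin.snoc_castSucc, Fin.snoc_castSucc] at hab
          exact congrArg Fin.castSucc (hinj hab)
    · intro l
      induction l using Fin.lastCases with
      | last => rw [Fin.snoc_last]; exact hqS
      | cast k =>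
        rw [Fin.snoc_castSucc]
        exact fun h => hS k (Finset.mem_insert_of_mem h)
    · intro l l' h
      induction l' using Fin.lastCases with
      | last =>
        rw [Fin.snoc_last] at h
        exact absurd h (hqσ l)
      | cast k =>
        rw [Fin.snoc_castSucc] at h
        induction l using Fin.lastCases with
        | last => exact Fin.castSucc_lt_last k
        | cast u => exact Fin.castSucc_lt_castSucc_iff.mpr (hlt u k h)

lemma prod_mem_fittingIdeal {R : Type} [CommRing R] {m j : ℕ} (hj : m - j < m)
    (f : Fin m → R) (b : Fin (m - j) → Fin m → R) (σ : Fin (m - j) → Fin m)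
    (hrel : ∀ l i i', b l i * f i' = b l i' * f i) :
    (∏ l, b l (σ l)) ∈ fittingIdeal m f j := by
  obtain ⟨p, hpinj, -, hplt⟩ := exists_good_rows σ ∅ (by simpa using hj)
  have hpσ : ∀ l, p l ≠ σ l := fun l h => absurd (hplt l l h.symm) (lt_irrefl l)
  set c : Fin (m - j) → Fin m → R := fun l i =>
    (if i = p l then b l (σ l) else 0) - (if i = σ l then b l (p l) else 0) with hc
  have hsum : ∀ l, ∑ i, c l i • f i = 0 := by
    intro l
    simp only [hc, smul_eq_mul, sub_mul, ite_mul, zero_mul, Finset.sum_sub_distrib,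
      Finset.sum_ite_eq', Finset.mem_univ, if_true]
    rw [hrel l (σ l) (p l), sub_self]
  have hdet : (Matrix.of fun i l => c l (p i)).det = ∏ l, b l (σ l) := by
    rw [Matrix.det_of_upperTriangular]
    · refine Finset.prod_congr rfl fun l _ => ?_
      simp [hc, hpσ l]
    · intro i k hik
      have h1 : p i ≠ p k := fun h => absurd (hpinj h) (ne_of_gt hik)
      have h2 : p i ≠ σ k := fun h => absurd (hplt k i h.symm) (lt_asymm hik)
      simp [hc, h1, h2]
  exact Ideal.subset_span ⟨c, hsum, p, hdet.symm⟩
open nonZeroDivisors in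
theorem trace_pow_le_fittingIdeal {R : Type} [CommRing R] [IsDomain R] [IsNoetherianRing R]
    (I : Ideal R) (hI : I ≠ ⊥)
    (m : ℕ) (f : Fin m → R) (hf : Ideal.span (Set.range f) = I)
    (j : ℕ) (h1 : 1 ≤ j) (h2 : j ≤ m) :
    ((I : FractionalIdeal R⁰ (FractionRing R))⁻¹ *
        (I : FractionalIdeal R⁰ (FractionRing R))) ^ (m - j) ≤
      ((fittingIdeal m f j : Ideal R) : FractionalIdeal R⁰ (FractionRing R)) := by
  classical
  set K := FractionRing R with hK
  set A := algebraMap R K with hA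
  have hI0 : (I : FractionalIdeal R⁰ K) ≠ 0 := FractionalIdeal.coeIdeal_ne_zero.mpr hI
  set V := ((I : FractionalIdeal R⁰ K))⁻¹ with hV
  rw [← FractionalIdeal.coe_le_coe, FractionalIdeal.coe_pow, FractionalIdeal.coe_mul]
  have hIcoe : ((I : FractionalIdeal R⁰ K) : Submodule R K)
      = Submodule.span R (A '' Set.range f) := by
    rw [FractionalIdeal.coe_coeIdeal, IsLocalization.coeSubmodule, ← hf]
    show Submodule.map _ (Submodule.span R _) = _
    rw [Submodule.map_span]
    rfl
  rw [hIcoe, ← Submodule.span_eq (V : Submodule R K), Submodule.span_mul_span,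
    Submodule.span_pow, Submodule.span_le]
  rintro x hx
  obtain ⟨g, hg⟩ := Set.mem_pow.mp hx
  have hmem : ∀ i : Fin (m - j), ∃ (h : K) (t : Fin m), h ∈ V ∧ (g i : K) = h * A (f t) := by
    intro i
    obtain ⟨a, ha, bb, hb, habe⟩ := Set.mem_mul.mp (g i).2
    obtain ⟨y, ⟨t, rfl⟩, rfl⟩ := hb
    refine ⟨a, t, ?_, habe.symm⟩
    rwa [SetLike.mem_coe, FractionalIdeal.mem_coe] at ha
  choose h σ hhV hgi using hmem
  have hbR : ∀ (l : Fin (m - j)) (i : Fin m), ∃ r : R, A r = h l * A (f i) := by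
    intro l i
    have hfiI : f i ∈ I := hf ▸ Ideal.subset_span ⟨i, rfl⟩
    have hfi : A (f i) ∈ (I : FractionalIdeal R⁰ K) :=
      (FractionalIdeal.mem_coeIdeal _).mpr ⟨f i, hfiI, rfl⟩
    have := (FractionalIdeal.mem_inv_iff hI0).mp (hhV l) _ hfi
    exact (FractionalIdeal.mem_one_iff _).mp this
  choose b hbA using hbR
  have hrel : ∀ l i i', b l i * f i' = b l i' * f i := by
    intro l i i'
    apply IsFractionRing.injective R K
    rw [_root_.map_mul, _root_.map_mul, hbA, hbA]
    ring
  have hy : (∏ l, b l (σ l)) ∈ fittingIdeal m f j :=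
    prod_mem_fittingIdeal (by omega) f b σ hrel
  have hx' : x = A (∏ l, b l (σ l)) := by
    rw [map_prod, ← hg, List.prod_ofFn]
    exact Finset.prod_congr rfl fun l _ => by rw [hgi l, hbA]
  rw [hx']
  exact FractionalIdeal.mem_coe.mpr ((FractionalIdeal.mem_coeIdeal _).mpr ⟨_, hy, rfl⟩)
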